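/- For every c ≥ (4n-1)/(4n-3) (with n ≥ 1), the function φ(t,τ) = (c+1) K_{2,2}(S_{2n}^+; t,τ) - c K_{2,2}(S_n^+; t,τ) is nonpositive on [a,b]^2, where K_{2,2}(S_m^+; t,τ) = K_2(Q^{Tr}; t) K_2(Q_m^{Tr}; τ) + K_2(Q^{Tr}; τ) K_2(Q_m^{Tr}; t) - K_2(Q_m^{Tr}; t) K_2(Q_m^{Tr}; τ). Moreover c = (4n-1)/(4n-3) is the smallest constant with this property. -/

import Mathlib

set_option maxHeartbeats 1000000


/-- Second Peano kernel of the simple trapezium rule on `[a,b]`. -/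
noncomputable def peanoK2TrapSimple (a b t : ℝ) : ℝ := (1 / 2) * (t - a) * (t - b)

/-- Second Peano kernel of the composite trapezium rule. -/
noncomputable def peanoK2Trap (a b : ℝ) (n : ℕ) (t : ℝ) : ℝ :=
  (b - t) ^ 2 / 2 - ∑ i ∈ Finset.range (n + 1),
    (if i = 0 ∨ i = n then (b - a) / (2 * n) else (b - a) / n) *
      max (a + i * ((b - a) / n) - t) 0

/-- Peano kernel `K_{2,2}(S_m^+; t,τ)`. -/
noncomputable def K22plus (a b : ℝ) (m : ℕ) (t τ : ℝ) : ℝ :=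
  peanoK2TrapSimple a b t * peanoK2Trap a b m τ +
    peanoK2TrapSimple a b τ * peanoK2Trap a b m t
    - peanoK2Trap a b m t * peanoK2Trap a b m τ

lemma sum_range_cast (N : ℕ) : ∑ i ∈ Finset.range N, (i : ℝ) = N * (N - 1) / 2 := by
  induction N with
  | zero => simp
  | succ n ih => rw [Finset.sum_range_succ, ih]; push_cast; ring

lemma peanoK2Trap_eval (a b : ℝ) (hab : a < b) (m : ℕ) (k : ℕ) (hk : k < m)
    (t : ℝ) (h1 : a + k * ((b - a) / m) ≤ t) (h2 : t ≤ a + (k + 1) * ((b - a) / m)) :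
    peanoK2Trap a b m t
      = -(1 / 2) * (t - (a + k * ((b - a) / m))) * ((a + (k + 1) * ((b - a) / m)) - t) := by
  have hm : 0 < m := lt_of_le_of_lt (Nat.zero_le k) hk
  have hm0 : (m : ℝ) ≠ 0 := Nat.cast_ne_zero.mpr hm.ne'
  have hmR : (0:ℝ) < m := Nat.cast_pos.mpr hm
  have hH : 0 < (b - a) / m := div_pos (by linarith) hmR
  set H : ℝ := (b - a) / m with hHdef
  unfold peanoK2Trap
  have hstep : ∀ i : ℕ,
      (if i = 0 ∨ i = m then (b - a) / (2 * m) else (b - a) / m) * max (a + i * H - t) 0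
      = (if i = m then (b - a) / (2 * m) else (b - a) / m) *
          (if k + 1 ≤ i then a + i * H - t else 0) := by
    intro i
    rcases le_or_gt (k + 1) i with hi | hi
    · have hiR : (k:ℝ) + 1 ≤ (i:ℝ) := by exact_mod_cast hi
      have : t ≤ a + i * H := by nlinarith
      rw [max_eq_left (by linarith), if_pos hi]
      have h0 : ¬ (i = 0) := by omega
      by_cases him : i = m
      · simp [him]
      · simp [him, h0]
    · have hiR : (i:ℝ) ≤ (k:ℝ) := by exact_mod_cast Nat.lt_succ_iff.mp hi
      have : a + i * H ≤ t := by nlinarith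
      rw [max_eq_right (by linarith), mul_zero, if_neg (show ¬ (k + 1 ≤ i) by omega), mul_zero]
  rw [Finset.sum_congr rfl (fun i _ => hstep i)]
  have hsub : Finset.Ico (k + 1) (m + 1) ⊆ Finset.range (m + 1) := by
    intro x hx
    simp only [Finset.mem_Ico] at hx
    exact Finset.mem_range.mpr hx.2
  rw [← Finset.sum_subset hsub (by
    intro x hmem hx
    have hxr := Finset.mem_range.mp hmem
    simp only [Finset.mem_Ico, not_and, not_le] at hx
    have hxk : ¬ (k + 1 ≤ x) := fun hc => by omega
    rw [if_neg hxk, mul_zero])]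
  rw [Finset.sum_congr rfl (fun i hi => by
    rw [if_pos (Finset.mem_Ico.mp hi).1])]
  rw [Finset.sum_Ico_succ_top (by omega : k + 1 ≤ m)]
  rw [if_pos rfl]
  rw [Finset.sum_congr rfl (fun i hi => by
    rw [if_neg (by have := Finset.mem_Ico.mp hi; omega)])]
  have hsplit : ∀ i : ℕ, (b - a) / m * (a + i * H - t)
      = (b - a) / m * (a - t) + ((b - a) / m * H) * (i : ℝ) := fun i => by ring
  rw [Finset.sum_congr rfl (fun i _ => hsplit i), Finset.sum_add_distrib,
    Finset.sum_const, ← Finset.mul_sum, Finset.sum_Ico_eq_sub _ (by omega : k + 1 ≤ m),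
    sum_range_cast, sum_range_cast, Nat.card_Ico]
  have hcard : ((m - (k + 1) : ℕ) : ℝ) = (m : ℝ) - (k : ℝ) - 1 := by
    have : k + 1 ≤ m := by omega
    push_cast [this]; ring
  rw [nsmul_eq_mul, hcard, hHdef]
  have hb : b = a + m * ((b - a) / m) := by field_simp; ring
  push_cast
  field_simp
  ring

lemma exists_interval (a b : ℝ) (hab : a < b) (m : ℕ) (hm : 0 < m) (t : ℝ)
    (ht : t ∈ Set.Icc a b) :
    ∃ k : ℕ, k < m ∧ a + k * ((b - a) / m) ≤ t ∧ t ≤ a + (k + 1) * ((b - a) / m) := by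
  obtain ⟨ht1, ht2⟩ := ht
  have hm0 : (m : ℝ) ≠ 0 := Nat.cast_ne_zero.mpr hm.ne'
  have hmR : (0:ℝ) < m := Nat.cast_pos.mpr hm
  have hba : (0:ℝ) < b - a := by linarith
  have hH : 0 < (b - a) / m := div_pos hba hmR
  obtain ⟨x, hxdef⟩ : ∃ x : ℝ, x = (t - a) * m / (b - a) := ⟨_, rfl⟩
  have hx0 : 0 ≤ x := by
    rw [hxdef]
    exact div_nonneg (mul_nonneg (by linarith) hmR.le) hba.le
  have hxH : x * ((b - a) / m) = t - a := by rw [hxdef]; field_simp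
  have hxm : x ≤ m := by
    rw [hxdef, div_le_iff₀ hba]
    nlinarith
  by_cases hj : ⌊x⌋₊ < m
  · refine ⟨⌊x⌋₊, hj, ?_, ?_⟩
    · have h1 : (⌊x⌋₊ : ℝ) ≤ x := Nat.floor_le hx0
      nlinarith
    · have h2 : x < ⌊x⌋₊ + 1 := Nat.lt_floor_add_one x
      nlinarith
  · have hmx : (m : ℝ) ≤ x := by
      push_neg at hj
      calc (m : ℝ) ≤ (⌊x⌋₊ : ℝ) := by exact_mod_cast hj
        _ ≤ x := Nat.floor_le hx0
    have hmb : (m : ℝ) * ((b - a) / m) = b - a := by field_simp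
    have hxb : t = b := by
      have h3 := mul_le_mul_of_nonneg_right hmx hH.le
      linarith [hxH, hmb, ht2]
    have hcast : ((m - 1 : ℕ) : ℝ) = (m : ℝ) - 1 := by
      push_cast [Nat.one_le_iff_ne_zero.mpr hm.ne']; ring
    refine ⟨m - 1, by omega, ?_, ?_⟩
    · rw [hcast, hxb]; nlinarith
    · rw [hcast, hxb]; nlinarith

lemma kernel_props (a b : ℝ) (hab : a < b) (n : ℕ) (hn : 0 < n) (t : ℝ)
    (ht : t ∈ Set.Icc a b) :
    ∃ d : ℝ, 0 ≤ d ∧ 2 * d ≤ (b - a) / n ∧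
      peanoK2Trap a b n t = -(1/2) * d * ((b - a) / n - d) ∧
      peanoK2Trap a b (2 * n) t = -(1/2) * d * ((b - a) / n / 2 - d) ∧
      d * ((b - a) - d) ≤ (t - a) * (b - t) := by
  obtain ⟨k, hk, h1, h2⟩ := exists_interval a b hab n hn t ht
  have hn0 : (n : ℝ) ≠ 0 := Nat.cast_ne_zero.mpr hn.ne'
  have hnR : (0:ℝ) < n := Nat.cast_pos.mpr hn
  have hba : (0:ℝ) < b - a := by linarith
  obtain ⟨H, hHdef⟩ : ∃ H : ℝ, H = (b - a) / (n : ℝ) := ⟨_, rfl⟩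
  have hH : 0 < H := by rw [hHdef]; exact div_pos hba hnR
  have h1H : a + k * H ≤ t := by rw [hHdef]; exact h1
  have h2H : t ≤ a + ((k : ℝ) + 1) * H := by rw [hHdef]; exact h2
  obtain ⟨x, hxdef⟩ : ∃ x : ℝ, x = t - (a + k * H) := ⟨_, rfl⟩
  have hx0 : 0 ≤ x := by rw [hxdef]; linarith
  have hxH : x ≤ H := by rw [hxdef]; nlinarith
  have hxt : t = a + k * H + x := by rw [hxdef]; ring
  obtain ⟨d, hddef⟩ : ∃ d : ℝ, d = min x (H - x) := ⟨_, rfl⟩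
  have hdx : d ≤ x := hddef ▸ min_le_left _ _
  have hdHx : d ≤ H - x := hddef ▸ min_le_right _ _
  have hd0 : 0 ≤ d := by rw [hddef]; exact le_min hx0 (by linarith)
  have hdH : 2 * d ≤ H := by linarith
  have hb : b = a + n * H := by rw [hHdef]; field_simp; ring
  have h2nc : ((2 * n : ℕ) : ℝ) = 2 * (n : ℝ) := by push_cast; ring
  have hH2 : (b - a) / ((2 * n : ℕ) : ℝ) = H / 2 := by
    rw [h2nc, hHdef, div_div, mul_comm]
  have hcoarse : peanoK2Trap a b n t = -(1/2) * d * (H - d) := by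
    rw [peanoK2Trap_eval a b hab n k hk t h1 h2, ← hHdef]
    have e2 : a + ((k : ℝ) + 1) * H - t = H - x := by rw [hxdef]; ring
    rw [← hxdef, e2]
    rcases min_cases x (H - x) with ⟨he, _⟩ | ⟨he, _⟩ <;>
      rw [show d = _ from hddef.trans he] <;> ring
  have hfine : peanoK2Trap a b (2 * n) t = -(1/2) * d * (H / 2 - d) := by
    by_cases hx : x ≤ H / 2
    · have hkk : 2 * k < 2 * n := by omega
      have c1 : a + ((2 * k : ℕ) : ℝ) * ((b - a) / ((2 * n : ℕ) : ℝ)) = a + k * H := by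
        rw [hH2]; push_cast; ring
      have c2 : a + (((2 * k : ℕ) : ℝ) + 1) * ((b - a) / ((2 * n : ℕ) : ℝ))
          = a + k * H + H / 2 := by
        rw [hH2]; push_cast; ring
      rw [peanoK2Trap_eval a b hab (2 * n) (2 * k) hkk t
        (by rw [c1]; linarith) (by rw [c2]; linarith), c1, c2]
      have hde : d = x := hddef.trans (min_eq_left (by linarith))
      rw [hde, ← hxdef]
      rw [hxdef]; ring
    · push_neg at hx
      have hkk : 2 * k + 1 < 2 * n := by omega
      have c1 : a + ((2 * k + 1 : ℕ) : ℝ) * ((b - a) / ((2 * n : ℕ) : ℝ))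
          = a + k * H + H / 2 := by
        rw [hH2]; push_cast; ring
      have c2 : a + (((2 * k + 1 : ℕ) : ℝ) + 1) * ((b - a) / ((2 * n : ℕ) : ℝ))
          = a + ((k : ℝ) + 1) * H := by
        rw [hH2]; push_cast; ring
      rw [peanoK2Trap_eval a b hab (2 * n) (2 * k + 1) hkk t
        (by rw [c1]; linarith) (by rw [c2]; linarith), c1, c2]
      have hde : d = H - x := hddef.trans (min_eq_right (by linarith))
      rw [hde, hxdef]; ring
  have hk0 : (0:ℝ) ≤ (k : ℝ) := Nat.cast_nonneg k
  have hkn : (k : ℝ) + 1 ≤ (n : ℝ) := by exact_mod_cast hk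
  have hta : d ≤ t - a := by nlinarith [mul_nonneg hk0 hH.le]
  have hbt : d ≤ b - t := by nlinarith [mul_nonneg (by linarith : (0:ℝ) ≤ (n:ℝ) - k - 1) hH.le]
  refine ⟨d, hd0, ?_, ?_, ?_, ?_⟩
  · rw [← hHdef]; exact hdH
  · rw [← hHdef]; exact hcoarse
  · rw [← hHdef]; exact hfine
  · have key : (t - a) * (b - t) - d * ((b - a) - d) = (t - a - d) * (b - t - d) := by ring
    linarith [key, mul_nonneg (by linarith : (0:ℝ) ≤ t - a - d) (by linarith : (0:ℝ) ≤ b - t - d)]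

lemma core (nr H c d d' u u' : ℝ) (hn : 1 ≤ nr) (hH : 0 < H)
    (hc : (4 * nr - 1) / (4 * nr - 3) ≤ c)
    (hd0 : 0 ≤ d) (hd : 2 * d ≤ H) (hd0' : 0 ≤ d') (hd' : 2 * d' ≤ H)
    (hu : d * (nr * H - d) ≤ 2 * u) (hu' : d' * (nr * H - d') ≤ 2 * u') :
    (c + 1) * (u * (d' * (H / 2 - d') / 2) + u' * (d * (H / 2 - d) / 2)
        - (d * (H / 2 - d) / 2) * (d' * (H / 2 - d') / 2))
      - c * (u * (d' * (H - d') / 2) + u' * (d * (H - d) / 2)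
        - (d * (H - d) / 2) * (d' * (H - d') / 2)) ≤ 0 := by
  have h43 : (0:ℝ) < 4 * nr - 3 := by linarith
  have hc' : 4 * nr - 1 ≤ c * (4 * nr - 3) := by
    rw [div_le_iff₀ h43] at hc; linarith
  have f1 : 0 ≤ 2 * u - d * (H - d) := by
    nlinarith [mul_nonneg hd0 (mul_nonneg (by linarith : (0:ℝ) ≤ nr - 1) hH.le)]
  have f1' : 0 ≤ 2 * u' - d' * (H - d') := by
    nlinarith [mul_nonneg hd0' (mul_nonneg (by linarith : (0:ℝ) ≤ nr - 1) hH.le)]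
  have f2 : 0 ≤ 2 * u' - d' * (H / 2 - d') := by
    nlinarith [mul_nonneg hd0' (mul_nonneg (by linarith : (0:ℝ) ≤ nr - 1/2) hH.le)]
  have e1 : (0:ℝ) ≤ (2 * u - d * (nr * H - d)) * (d' * (H + (4 * nr - 3) * d')) :=
    mul_nonneg (by linarith) (mul_nonneg hd0' (by nlinarith))
  have e2 : (0:ℝ) ≤ (2 * u' - d' * (nr * H - d')) * (d * (H + (4 * nr - 3) * d)) :=
    mul_nonneg (by linarith) (mul_nonneg hd0 (by nlinarith))
  have e3 : (0:ℝ) ≤ (4 * nr - 3) * (d * d') * (nr * H * (d + d') - d * d') := by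
    refine mul_nonneg (mul_nonneg h43.le (mul_nonneg hd0 hd0')) ?_
    nlinarith [mul_nonneg (mul_nonneg (by linarith : (0:ℝ) ≤ nr - 1) hH.le)
      (by linarith : (0:ℝ) ≤ d + d'), mul_nonneg hd0 (by linarith : (0:ℝ) ≤ H - 2 * d'),
      mul_nonneg hd0' hH.le]
  -- abbreviations as pure terms
  have hMN : 0 ≤ (u * (d' * (H - d') / 2) + u' * (d * (H - d) / 2)
        - (d * (H - d) / 2) * (d' * (H - d') / 2))
      - (u * (d' * (H / 2 - d') / 2) + u' * (d * (H / 2 - d) / 2)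
        - (d * (H / 2 - d) / 2) * (d' * (H / 2 - d') / 2)) := by
    nlinarith [mul_nonneg (mul_nonneg f1 hH.le) hd0', mul_nonneg (mul_nonneg f2 hH.le) hd0]
  have hkey : (4 * nr - 3) * (u * (d' * (H / 2 - d') / 2) + u' * (d * (H / 2 - d) / 2)
        - (d * (H / 2 - d) / 2) * (d' * (H / 2 - d') / 2))
      ≤ (4 * nr - 1) * ((u * (d' * (H - d') / 2) + u' * (d * (H - d) / 2)
        - (d * (H - d) / 2) * (d' * (H - d') / 2))
      - (u * (d' * (H / 2 - d') / 2) + u' * (d * (H / 2 - d) / 2)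
        - (d * (H / 2 - d) / 2) * (d' * (H / 2 - d') / 2))) := by
    nlinarith [e1, e2, e3]
  have hMN' : 0 ≤ (c * (4 * nr - 3) - (4 * nr - 1)) * ((u * (d' * (H - d') / 2) + u' * (d * (H - d) / 2)
        - (d * (H - d) / 2) * (d' * (H - d') / 2))
      - (u * (d' * (H / 2 - d') / 2) + u' * (d * (H / 2 - d) / 2)
        - (d * (H / 2 - d) / 2) * (d' * (H / 2 - d') / 2))) :=
    mul_nonneg (by linarith) hMN
  nlinarith [hkey, hMN', h43]


/-- For every `c ≥ (4n-1)/(4n-3)` the function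
`φ = (c+1) K_{2,2}(S_{2n}^+) - c K_{2,2}(S_n^+)` is nonpositive on `[a,b]^2`,
and `c = (4n-1)/(4n-3)` is the smallest constant with this property. -/
theorem Splus_kernel_difference (a b : ℝ) (hab : a < b) (n : ℕ) (hn : 0 < n) :
    (∀ c : ℝ, (4 * (n : ℝ) - 1) / (4 * n - 3) ≤ c →
      ∀ t ∈ Set.Icc a b, ∀ τ ∈ Set.Icc a b,
        (c + 1) * K22plus a b (2 * n) t τ - c * K22plus a b n t τ ≤ 0) ∧
    (∀ c : ℝ, (∀ t ∈ Set.Icc a b, ∀ τ ∈ Set.Icc a b,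
        (c + 1) * K22plus a b (2 * n) t τ - c * K22plus a b n t τ ≤ 0) →
      (4 * (n : ℝ) - 1) / (4 * n - 3) ≤ c) := by
  have hnR : (0:ℝ) < n := Nat.cast_pos.mpr hn
  have hn1 : (1:ℝ) ≤ n := by exact_mod_cast hn
  have hba : (0:ℝ) < b - a := by linarith
  have hn0 : (n : ℝ) ≠ 0 := hnR.ne'
  have hH : (0:ℝ) < (b - a) / n := div_pos hba hnR
  have hnH : (n:ℝ) * ((b - a) / n) = b - a := by field_simp
  constructor
  · intro c hc t ht τ hτ
    obtain ⟨d, hd0, hdH, hcoa, hfin, hu⟩ := kernel_props a b hab n hn t ht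
    obtain ⟨e, he0, heH, hcoa', hfin', hu'⟩ := kernel_props a b hab n hn τ hτ
    have key := core (n:ℝ) ((b - a) / n) c d e ((t - a) * (b - t) / 2) ((τ - a) * (b - τ) / 2)
      hn1 hH hc hd0 hdH he0 heH
      (by rw [hnH]; linarith [hu]) (by rw [hnH]; linarith [hu'])
    have hsimt : peanoK2TrapSimple a b t = -((t - a) * (b - t) / 2) := by
      unfold peanoK2TrapSimple; ring
    have hsimτ : peanoK2TrapSimple a b τ = -((τ - a) * (b - τ) / 2) := by
      unfold peanoK2TrapSimple; ring
    unfold K22plus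
    rw [hsimt, hsimτ, hcoa, hfin, hcoa', hfin']
    nlinarith [key]
  · intro c hc
    have h43 : (0:ℝ) < 4 * (n:ℝ) - 3 := by linarith
    rw [div_le_iff₀ h43]
    by_contra hlt
    push_neg at hlt
    obtain ⟨H, hHdef⟩ : ∃ H : ℝ, H = (b - a) / (n : ℝ) := ⟨_, rfl⟩
    have hHpos : 0 < H := hHdef ▸ hH
    have hb : b = a + n * H := by rw [hHdef]; field_simp; ring
    have h2nc : ((2 * n : ℕ) : ℝ) = 2 * (n : ℝ) := by push_cast; ring
    have hH2 : (b - a) / ((2 * n : ℕ) : ℝ) = H / 2 := by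
      rw [h2nc, hHdef, div_div, mul_comm]
    obtain ⟨δ, hδdef⟩ : ∃ δ : ℝ, δ = 4 * (n:ℝ) - 1 - c * (4 * n - 3) := ⟨_, rfl⟩
    have hδ : 0 < δ := by rw [hδdef]; linarith
    obtain ⟨d, hddef⟩ : ∃ d : ℝ, d = min (H / 2) (δ * H / (16 * n)) := ⟨_, rfl⟩
    have hd1 : d ≤ H / 2 := hddef ▸ min_le_left _ _
    have hd2 : d ≤ δ * H / (16 * n) := hddef ▸ min_le_right _ _
    have hd0 : 0 < d := by
      rw [hddef]
      exact lt_min (by linarith) (div_pos (mul_pos hδ hHpos) (by positivity))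
    have hd2' : 16 * (n:ℝ) * d ≤ δ * H := by
      rw [le_div_iff₀ (by positivity : (0:ℝ) < 16 * (n:ℝ))] at hd2
      linarith [hd2]
    have hHba : H ≤ b - a := by
      rw [hHdef]
      exact div_le_self hba.le hn1
    have ht0 : a + d ∈ Set.Icc a b := by
      constructor <;> [linarith; linarith]
    have eC : peanoK2Trap a b n (a + d) = -(1/2) * d * (H - d) := by
      rw [peanoK2Trap_eval a b hab n 0 hn (a + d)
        (by push_cast; nlinarith) (by push_cast; rw [← hHdef]; nlinarith)]
      rw [← hHdef]
      push_cast
      ring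
    have eF : peanoK2Trap a b (2 * n) (a + d) = -(1/2) * d * (H / 2 - d) := by
      rw [peanoK2Trap_eval a b hab (2 * n) 0 (by omega) (a + d)
        (by rw [hH2]; push_cast; nlinarith) (by rw [hH2]; push_cast; nlinarith)]
      rw [hH2]
      push_cast
      ring
    have eS : peanoK2TrapSimple a b (a + d) = -(d * ((n:ℝ) * H - d) / 2) := by
      unfold peanoK2TrapSimple
      rw [hb]; ring
    have hval : (c + 1) * K22plus a b (2 * n) (a + d) (a + d)
        - c * K22plus a b n (a + d) (a + d)
        = (c + 1) * (2 * (d * ((n:ℝ) * H - d) / 2) * (d * (H / 2 - d) / 2)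
            - (d * (H / 2 - d) / 2) ^ 2)
          - c * (2 * (d * ((n:ℝ) * H - d) / 2) * (d * (H - d) / 2)
            - (d * (H - d) / 2) ^ 2) := by
      unfold K22plus
      rw [eS, eC, eF]; ring
    have hφ := hc (a + d) ht0 (a + d) ht0
    rw [hval] at hφ
    -- contradiction
    have h1' : 0 ≤ (δ * H - 16 * (n:ℝ) * d) * (d * d * H) := by
      refine mul_nonneg (by linarith) (by positivity)
    have h2' : 0 < δ * ((H * d) * (H * d)) := by positivity
    have hδc : c * (4 * (n:ℝ) - 3) = 4 * n - 1 - δ := by rw [hδdef]; ring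
    nlinarith [hφ, h1', h2', hd0, hHpos, pow_pos hd0 4, sq_nonneg (d * d), hδc]
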